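/- Let f be a Boolean function on n variables, let J₁ ⊆ J₂ be finite index sets with |J₁| = k and |J₂| = d, and identify 𝔽₂^{J₂} with 𝔽₂^{J₁} × 𝔽₂^{J₂∖J₁}, writing elements as pairs (w, w'). Suppose V₁ = (V₁[0],…,V₁[n-1]) with V₁[i] : 𝔽₂^{J₁} → ℤ ∪ {-∞}, and V₂ = (V₂[0],…,V₂[n-1]) with V₂[i] : 𝔽₂^{J₂} → ℤ ∪ {-∞}, satisfy V₁[i](w) ≥ max_{w' ∈ 𝔽₂^{J₂∖J₁}} ( V₂[i](w, w') + wt(w') ) for all 0 ≤ i ≤ n-1 and all w ∈ 𝔽₂^{J₁}. Then for all w ∈ 𝔽₂^{J₁}: VDEG_k(f, V₁)(w) ≥ max_{w' ∈ 𝔽₂^{J₂∖J₁}} ( VDEG_d(f, V₂)(w, w') + wt(w') ). -/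

import Mathlib

open Finset

section Core

variable {α : Type*}

/-- The monomial `x^u` over `𝔽₂`. -/
def monom [Fintype α] (u x : α → ZMod 2) : ZMod 2 :=
  ∏ i, if u i = 1 then x i else 1

/-- The ANF coefficient of the monomial `x^u` in `f`, via Möbius inversion. -/
def anf [Fintype α] [DecidableEq α] (f : (α → ZMod 2) → ZMod 2) (u : α → ZMod 2) : ZMod 2 :=
  ∑ v ∈ Finset.univ.filter (fun v : α → ZMod 2 => ∀ i, v i = 1 → u i = 1), f v

/-- Hamming weight. -/
def wt [Fintype α] (u : α → ZMod 2) : ℕ :=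
  (Finset.univ.filter (fun i => u i = 1)).card

/-- Algebraic degree, in `ℤ ∪ {-∞}`. -/
def deg [Fintype α] [DecidableEq α] (f : (α → ZMod 2) → ZMod 2) : WithBot ℤ :=
  (Finset.univ.filter (fun u : α → ZMod 2 => anf f u = 1)).sup
    (fun u => ((wt u : ℤ) : WithBot ℤ))

/-- Combine an assignment on `I` with one on `Iᶜ` to a full assignment. -/
def combine [Fintype α] [DecidableEq α] (I : Finset α) (w : ↥I → ZMod 2)
    (y : ↥Iᶜ → ZMod 2) : α → ZMod 2 :=
  fun i => if h : i ∈ I then w ⟨i, h⟩ else y ⟨i, Finset.mem_compl.mpr h⟩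

/-- The coefficient function `g_{f,w}` of `x_I^w` in `f`, a Boolean function of `x_{Iᶜ}`. -/
def coeffFun [Fintype α] [DecidableEq α] (f : (α → ZMod 2) → ZMod 2) (I : Finset α)
    (w : ↥I → ZMod 2) : (↥Iᶜ → ZMod 2) → ZMod 2 :=
  fun y => ∑ t : ↥Iᶜ → ZMod 2, anf f (combine I w t) * monom t y

/-- The vector degree of `f` w.r.t. the index set `I`. -/
def vdeg [Fintype α] [DecidableEq α] (f : (α → ZMod 2) → ZMod 2) (I : Finset α)
    (w : ↥I → ZMod 2) : WithBot ℤ :=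
  deg (coeffFun f I w)

/-- `f` with the variables outside `S` set to `0`. -/
def restrict0 [Fintype α] [DecidableEq α] (f : (α → ZMod 2) → ZMod 2) (S : Finset α) :
    (α → ZMod 2) → ZMod 2 :=
  fun x => f (fun i => if i ∈ S then x i else 0)

/-- Combine an assignment on `I₁` with one on `I₂ \ I₁` to an assignment on `I₂`. -/
def joinFn [DecidableEq α] {I₁ I₂ : Finset α} (w : ↥I₁ → ZMod 2)
    (w' : ↥(I₂ \ I₁) → ZMod 2) : ↥I₂ → ZMod 2 :=
  fun j => if h : (j : α) ∈ I₁ then w ⟨(j : α), h⟩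
           else w' ⟨(j : α), Finset.mem_sdiff.mpr ⟨j.2, h⟩⟩

end Core

/-- Coordinatewise OR of the family `W i`, over indices `i` with `u i = 1`. -/
def orFam {n : ℕ} {β : Type*} (u : Fin n → ZMod 2) (W : Fin n → β → ZMod 2) :
    β → ZMod 2 :=
  fun j => if ∃ i, u i = 1 ∧ W i j = 1 then 1 else 0

/-- The vector numeric mapping `VDEG_d(f, V)`. -/
def VDEG {n : ℕ} {δ : Type*} [Fintype δ] [DecidableEq δ]
    (f : (Fin n → ZMod 2) → ZMod 2) (V : Fin n → (δ → ZMod 2) → WithBot ℤ)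
    (w : δ → ZMod 2) : WithBot ℤ :=
  (Finset.univ.filter (fun p : (Fin n → ZMod 2) × (Fin n → δ → ZMod 2) =>
      anf f p.1 = 1 ∧ (∀ i, p.1 i = 0 → p.2 i = 0) ∧ w = orFam p.1 p.2)).sup
    (fun p => ∑ i ∈ Finset.univ.filter (fun i => p.1 i = 1), V i (p.2 i))

/-- Monomial transition `π_u(x) → π_v(g(x))`. -/
def MonTrans {a b : ℕ} (g : (Fin a → ZMod 2) → (Fin b → ZMod 2))
    (u : Fin a → ZMod 2) (v : Fin b → ZMod 2) : Prop :=
  anf (fun x => monom v (g x)) u = 1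

/-- Monomial trails from level `a` to level `b`, with fixed endpoints `u`, `v`
(trails are normalized to be `0` outside the levels `a, …, b`). -/
def Trails (n : ℕ → ℕ) (f : ∀ i, (Fin (n i) → ZMod 2) → (Fin (n (i + 1)) → ZMod 2))
    (a b : ℕ) (u : Fin (n a) → ZMod 2) (v : Fin (n b) → ZMod 2) :
    Set (∀ i, Fin (n i) → ZMod 2) :=
  {t | t a = u ∧ t b = v ∧ (∀ i, a ≤ i → i < b → MonTrans (f i) (t i) (t (i + 1))) ∧
       (∀ i, i < a → t i = fun _ => 0) ∧ (∀ i, b < i → t i = fun _ => 0)}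

/-- The iterated composition `f_{b-1} ∘ ⋯ ∘ f_a` (meaningful for `a ≤ b`). -/
def iterComp (n : ℕ → ℕ) (f : ∀ i, (Fin (n i) → ZMod 2) → (Fin (n (i + 1)) → ZMod 2))
    (a : ℕ) : (b : ℕ) → (Fin (n a) → ZMod 2) → (Fin (n b) → ZMod 2)
  | 0 => fun x j => if h : a = 0 then x (Fin.cast (show n 0 = n a by rw [h]) j) else 0
  | b + 1 =>
      if h : a = b + 1 then fun x j => x (Fin.cast (show n (b + 1) = n a by rw [h]) j)
      else fun x => f b (iterComp n f a b x)

section Iterated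

/-- Embed an index set `J ⊆ {0,…,n-1}` into the joint index set of size `n' 0 = n + m`. -/
def liftJ {n m N0 : ℕ} (h0 : N0 = n + m) (J : Finset (Fin n)) : Finset (Fin N0) :=
  J.image (fun (j : Fin n) => (⟨j.val, by have := j.isLt; omega⟩ : Fin N0))

/-- Set the `x`-variables outside `S` to zero in a joint assignment. -/
def mask0 {n m N0 : ℕ} (h0 : N0 = n + m) (S : Finset (Fin n)) (z : Fin N0 → ZMod 2) :
    Fin N0 → ZMod 2 :=
  fun i => if h : (i : ℕ) < n then (if (⟨(i : ℕ), h⟩ : Fin n) ∈ S then z i else 0) else z i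

/-- The iterated estimated vector degrees `V_t^S`. -/
def Vt {n m : ℕ} (n' : ℕ → ℕ) (h0 : n' 0 = n + m)
    (f : ∀ t, (Fin (n' t) → ZMod 2) → (Fin (n' (t + 1)) → ZMod 2))
    (J S : Finset (Fin n)) :
    (t : ℕ) → Fin (n' (t + 1)) → (↥(liftJ h0 J) → ZMod 2) → WithBot ℤ
  | 0 => fun i => vdeg (fun z => f 0 (mask0 h0 S z) i) (liftJ h0 J)
  | t + 1 => fun i => VDEG (fun y => f (t + 1) y i) (Vt n' h0 f J S t)

/-- The estimated vector degree `vdeg-hat^S` (here `r = s + 2`). -/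
def vdegHat {n m : ℕ} (n' : ℕ → ℕ) (h0 : n' 0 = n + m)
    (f : ∀ t, (Fin (n' t) → ZMod 2) → (Fin (n' (t + 1)) → ZMod 2))
    (J : Finset (Fin n)) (s : ℕ) (S : Finset (Fin n)) :
    (↥(liftJ h0 J) → ZMod 2) → WithBot ℤ :=
  VDEG (fun y => monom (fun _ => 1) (f (s + 1) y)) (Vt n' h0 f J S s)

/-- The estimated degree `deg-hat^S`. -/
noncomputable def degHat {n m : ℕ} (n' : ℕ → ℕ) (h0 : n' 0 = n + m)
    (f : ∀ t, (Fin (n' t) → ZMod 2) → (Fin (n' (t + 1)) → ZMod 2))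
    (J : Finset (Fin n)) (s : ℕ) (S : Finset (Fin n)) : WithBot ℤ :=
  Finset.univ.sup (fun w : ↥(liftJ h0 J) → ZMod 2 =>
    vdegHat n' h0 f J s S w + ((wt w : ℤ) : WithBot ℤ))

end Iterated

lemma sup_add_le_aux {ι : Type*} (s : Finset ι) (g : ι → WithBot ℤ) (c T : WithBot ℤ)
    (hc : ∀ p ∈ s, g p + c ≤ T) : s.sup g + c ≤ T := by
  induction s using Finset.cons_induction with
  | empty => simp
  | cons a s ha ih =>
      have hmax : ∀ a b : WithBot ℤ, (a ⊔ b) + c = (a + c) ⊔ (b + c) := by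
        intro a b
        rcases le_total a b with hab | hab
        · rw [sup_eq_right.mpr hab, sup_eq_right.mpr (add_le_add_left hab c)]
        · rw [sup_eq_left.mpr hab, sup_eq_left.mpr (add_le_add_left hab c)]
      rw [Finset.sup_cons, hmax]
      exact max_le (hc a (Finset.mem_cons_self a s))
        (ih fun p hp => hc p (Finset.mem_cons_of_mem hp))

/-- Compatibility of the vector numeric mapping with shrinking the
index set from `J₂` to `J₁ ⊆ J₂`. -/
theorem VDEG_subset {n : ℕ} {γ : Type*} [Fintype γ] [DecidableEq γ]
    (f : (Fin n → ZMod 2) → ZMod 2) (J₁ J₂ : Finset γ) (h : J₁ ⊆ J₂)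
    (V₁ : Fin n → (↥J₁ → ZMod 2) → WithBot ℤ)
    (V₂ : Fin n → (↥J₂ → ZMod 2) → WithBot ℤ)
    (hyp : ∀ i (w : ↥J₁ → ZMod 2),
      Finset.univ.sup (fun w' : ↥(J₂ \ J₁) → ZMod 2 =>
        V₂ i (joinFn w w') + ((wt w' : ℤ) : WithBot ℤ)) ≤ V₁ i w)
    (w : ↥J₁ → ZMod 2) :
    Finset.univ.sup (fun w' : ↥(J₂ \ J₁) → ZMod 2 =>
      VDEG f V₂ (joinFn w w') + ((wt w' : ℤ) : WithBot ℤ)) ≤ VDEG f V₁ w := by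
  apply Finset.sup_le
  intro w' _
  unfold VDEG
  apply sup_add_le_aux
  rintro p hp
  simp only [Finset.mem_filter, Finset.mem_univ, true_and] at hp
  obtain ⟨hp1, hp2, hp3⟩ := hp
  -- restrictions of p.2 to J₁ and J₂ \ J₁
  set W₁ : Fin n → ↥J₁ → ZMod 2 := fun i j => p.2 i ⟨j.1, h j.2⟩ with hW₁
  set W' : Fin n → ↥(J₂ \ J₁) → ZMod 2 :=
    fun i j => p.2 i ⟨j.1, (Finset.mem_sdiff.mp j.2).1⟩ with hW'
  have hjoin : ∀ i, p.2 i = joinFn (W₁ i) (W' i) := by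
    intro i; funext j
    unfold joinFn
    split <;> rfl
  -- the restricted pair is admissible for VDEG f V₁ w
  have hmem : ((p.1, W₁) : (Fin n → ZMod 2) × (Fin n → ↥J₁ → ZMod 2)) ∈
      Finset.univ.filter (fun q : (Fin n → ZMod 2) × (Fin n → ↥J₁ → ZMod 2) =>
        anf f q.1 = 1 ∧ (∀ i, q.1 i = 0 → q.2 i = 0) ∧ w = orFam q.1 q.2) := by
    simp only [Finset.mem_filter, Finset.mem_univ, true_and]
    refine ⟨hp1, fun i hi => ?_, ?_⟩
    · funext j; simp [hW₁, hp2 i hi]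
    · funext j
      have hj := congrFun hp3 ⟨j.1, h j.2⟩
      simp only [joinFn, j.2, dif_pos] at hj
      simpa [orFam, hW₁] using hj
  have hV1 : (∑ i ∈ Finset.univ.filter (fun i => p.1 i = 1), V₁ i (W₁ i)) ≤
      VDEG f V₁ w := Finset.le_sup (f := fun q => ∑ i ∈ Finset.univ.filter
        (fun i => q.1 i = 1), V₁ i (q.2 i)) hmem
  refine le_trans ?_ hV1
  -- weight estimate: wt w' ≤ ∑ wt (W' i)
  have hwt : wt w' ≤ ∑ i ∈ Finset.univ.filter (fun i => p.1 i = 1), wt (W' i) := by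
    have hsub : (Finset.univ.filter (fun j : ↥(J₂ \ J₁) => w' j = 1)) ⊆
        (Finset.univ.filter (fun i : Fin n => p.1 i = 1)).biUnion
          (fun i => Finset.univ.filter (fun j : ↥(J₂ \ J₁) => W' i j = 1)) := by
      intro j hj
      simp only [Finset.mem_filter, Finset.mem_univ, true_and] at hj
      have hj2 := (Finset.mem_sdiff.mp j.2)
      have hjv := congrFun hp3 ⟨j.1, hj2.1⟩
      simp only [joinFn, hj2.2, dif_neg, not_false_iff] at hjv
      have hw' : w' j = orFam p.1 p.2 ⟨j.1, hj2.1⟩ := by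
        convert hjv using 2
      rw [hj] at hw'
      unfold orFam at hw'
      by_cases hex : ∃ i, p.1 i = 1 ∧ p.2 i ⟨j.1, hj2.1⟩ = 1
      · obtain ⟨i, hi1, hi2⟩ := hex
        simp only [Finset.mem_biUnion, Finset.mem_filter, Finset.mem_univ, true_and]
        exact ⟨i, hi1, by simpa [hW'] using hi2⟩
      · simp [hex] at hw'
    calc wt w' ≤ ((Finset.univ.filter (fun i : Fin n => p.1 i = 1)).biUnion
          (fun i => Finset.univ.filter (fun j : ↥(J₂ \ J₁) => W' i j = 1))).card :=
          Finset.card_le_card hsub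
      _ ≤ _ := Finset.card_biUnion_le
  -- cast the weight estimate into WithBot ℤ, split the sum
  calc (∑ i ∈ Finset.univ.filter (fun i => p.1 i = 1), V₂ i (p.2 i))
        + ((wt w' : ℤ) : WithBot ℤ)
      ≤ (∑ i ∈ Finset.univ.filter (fun i => p.1 i = 1), V₂ i (p.2 i))
        + ∑ i ∈ Finset.univ.filter (fun i => p.1 i = 1),
            ((wt (W' i) : ℤ) : WithBot ℤ) := by
        apply add_le_add_right
        have : ((wt w' : ℤ) : WithBot ℤ) ≤
            ((((∑ i ∈ Finset.univ.filter (fun i => p.1 i = 1), wt (W' i)) : ℕ) : ℤ)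
              : WithBot ℤ) := by
          exact_mod_cast hwt
        refine le_trans this (le_of_eq ?_)
        push_cast
        rfl
    _ = ∑ i ∈ Finset.univ.filter (fun i => p.1 i = 1),
          (V₂ i (p.2 i) + ((wt (W' i) : ℤ) : WithBot ℤ)) := by
        rw [Finset.sum_add_distrib]
    _ ≤ ∑ i ∈ Finset.univ.filter (fun i => p.1 i = 1), V₁ i (W₁ i) := by
        apply Finset.sum_le_sum
        intro i _
        refine le_trans ?_ (hyp i (W₁ i))
        rw [hjoin i]
        exact Finset.le_sup (f := fun w'' : ↥(J₂ \ J₁) → ZMod 2 =>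
          V₂ i (joinFn (W₁ i) w'') + ((wt w'' : ℤ) : WithBot ℤ))
          (Finset.mem_univ (W' i))
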